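/- arXiv:1901.08102 — 4 statements merged into one kernel-verified Lean document; each statement's English description precedes it below -/
import Mathlib

section
/- Let |φ⟩ = e^{iχ0}m|00⟩ + e^{iχ1}n|01⟩ + e^{iχ2}q|10⟩ + t|11⟩ be a unit vector in C^2⊗C^2 with m,n,q,t ≥ 0. The expansion of |φ⟩⟨φ| in the Pauli basis Σ T_{μν} σ_μ⊗σ_ν has vanishing off-diagonal correlation coefficients T_{ij} (i≠j, i,j∈{1,2,3}) if and only if the system of equations mn·cos(χ0-χ1)=qt·cos(χ2), mn·sin(χ0-χ1)=qt·sin(χ2), mq·cos(χ0-χ2)=nt·cos(χ1), mq·sin(χ0-χ2)=nt·sin(χ1), nq·sin(χ1-χ2)=0, mt·sin(χ0)=0 holds. -/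
open Matrix Kronecker

noncomputable def σx : Matrix (Fin 2) (Fin 2) ℂ := !![0, 1; 1, 0]
noncomputable def σy : Matrix (Fin 2) (Fin 2) ℂ := !![0, -Complex.I; Complex.I, 0]
noncomputable def σz : Matrix (Fin 2) (Fin 2) ℂ := !![1, 0; 0, -1]

/-- The Pauli basis `σ₀ = I, σ₁ = σx, σ₂ = σy, σ₃ = σz`. -/
noncomputable def pauli : Fin 4 → Matrix (Fin 2) (Fin 2) ℂ := ![1, σx, σy, σz]

set_option maxHeartbeats 1000000 in
theorem diagonal_correlation_iff_system (m n q t χ0 χ1 χ2 : ℝ)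
    (hm : 0 ≤ m) (hn : 0 ≤ n) (hq : 0 ≤ q) (ht : 0 ≤ t)
    (hunit : m ^ 2 + n ^ 2 + q ^ 2 + t ^ 2 = 1)
    (φ : Fin 2 × Fin 2 → ℂ)
    (hφ : φ = fun p =>
      if p = (0, 0) then Complex.exp (χ0 * Complex.I) * m
      else if p = (0, 1) then Complex.exp (χ1 * Complex.I) * n
      else if p = (1, 0) then Complex.exp (χ2 * Complex.I) * q
      else (t : ℂ))
    (T : Fin 4 → Fin 4 → ℂ)
    (hT : T = fun μ ν => ((1 : ℂ)/4) *
      ((pauli μ ⊗ₖ pauli ν) * vecMulVec φ (star φ)).trace) :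
    (∀ i j : Fin 4, i ≠ 0 → j ≠ 0 → i ≠ j → T i j = 0) ↔
      (m * n * Real.cos (χ0 - χ1) = q * t * Real.cos χ2 ∧
       m * n * Real.sin (χ0 - χ1) = q * t * Real.sin χ2 ∧
       m * q * Real.cos (χ0 - χ2) = n * t * Real.cos χ1 ∧
       m * q * Real.sin (χ0 - χ2) = n * t * Real.sin χ1 ∧
       n * q * Real.sin (χ1 - χ2) = 0 ∧
       m * t * Real.sin χ0 = 0) := by
  have h12 : T 1 2 = 0 ↔ m * t * Real.sin χ0 - n * q * Real.sin (χ1 - χ2) = 0 := by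
    rw [hT]
    simp [hφ, Matrix.trace, Matrix.mul_apply, Matrix.kroneckerMap_apply, pauli, σx, σy, σz,
      vecMulVec_apply, Fintype.sum_prod_type, Fin.sum_univ_succ, Matrix.one_apply,
      Complex.exp_mul_I, ← Complex.ofReal_cos, ← Complex.ofReal_sin, Complex.ext_iff,
      Real.cos_sub, Real.sin_sub]
    constructor
    · rintro ⟨h1, h2⟩; nlinarith [h1, h2]
    · intro h; constructor <;> nlinarith [h]
  have h21 : T 2 1 = 0 ↔ m * t * Real.sin χ0 + n * q * Real.sin (χ1 - χ2) = 0 := by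
    rw [hT]
    simp [hφ, Matrix.trace, Matrix.mul_apply, Matrix.kroneckerMap_apply, pauli, σx, σy, σz,
      vecMulVec_apply, Fintype.sum_prod_type, Fin.sum_univ_succ, Matrix.one_apply,
      Complex.exp_mul_I, ← Complex.ofReal_cos, ← Complex.ofReal_sin, Complex.ext_iff,
      Real.cos_sub, Real.sin_sub]
    constructor
    · rintro ⟨h1, h2⟩; nlinarith [h1, h2]
    · intro h; constructor <;> nlinarith [h]
  have h13 : T 1 3 = 0 ↔ m * q * Real.cos (χ0 - χ2) - n * t * Real.cos χ1 = 0 := by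
    rw [hT]
    simp [hφ, Matrix.trace, Matrix.mul_apply, Matrix.kroneckerMap_apply, pauli, σx, σy, σz,
      vecMulVec_apply, Fintype.sum_prod_type, Fin.sum_univ_succ, Matrix.one_apply,
      Complex.exp_mul_I, ← Complex.ofReal_cos, ← Complex.ofReal_sin, Complex.ext_iff,
      Real.cos_sub, Real.sin_sub]
    constructor
    · rintro ⟨h1, h2⟩; nlinarith [h1, h2]
    · intro h; constructor <;> nlinarith [h]
  have h23 : T 2 3 = 0 ↔ m * q * Real.sin (χ0 - χ2) - n * t * Real.sin χ1 = 0 := by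
    rw [hT]
    simp [hφ, Matrix.trace, Matrix.mul_apply, Matrix.kroneckerMap_apply, pauli, σx, σy, σz,
      vecMulVec_apply, Fintype.sum_prod_type, Fin.sum_univ_succ, Matrix.one_apply,
      Complex.exp_mul_I, ← Complex.ofReal_cos, ← Complex.ofReal_sin, Complex.ext_iff,
      Real.cos_sub, Real.sin_sub]
    constructor
    · rintro ⟨h1, h2⟩; nlinarith [h1, h2]
    · intro h; constructor <;> nlinarith [h]
  have h31 : T 3 1 = 0 ↔ m * n * Real.cos (χ0 - χ1) - q * t * Real.cos χ2 = 0 := by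
    rw [hT]
    simp [hφ, Matrix.trace, Matrix.mul_apply, Matrix.kroneckerMap_apply, pauli, σx, σy, σz,
      vecMulVec_apply, Fintype.sum_prod_type, Fin.sum_univ_succ, Matrix.one_apply,
      Complex.exp_mul_I, ← Complex.ofReal_cos, ← Complex.ofReal_sin, Complex.ext_iff,
      Real.cos_sub, Real.sin_sub]
    constructor
    · rintro ⟨h1, h2⟩; nlinarith [h1, h2]
    · intro h; constructor <;> nlinarith [h]
  have h32 : T 3 2 = 0 ↔ m * n * Real.sin (χ0 - χ1) - q * t * Real.sin χ2 = 0 := by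
    rw [hT]
    simp [hφ, Matrix.trace, Matrix.mul_apply, Matrix.kroneckerMap_apply, pauli, σx, σy, σz,
      vecMulVec_apply, Fintype.sum_prod_type, Fin.sum_univ_succ, Matrix.one_apply,
      Complex.exp_mul_I, ← Complex.ofReal_cos, ← Complex.ofReal_sin, Complex.ext_iff,
      Real.cos_sub, Real.sin_sub]
    constructor
    · rintro ⟨h1, h2⟩; nlinarith [h1, h2]
    · intro h; constructor <;> nlinarith [h]
  constructor
  · intro h
    have e12 := h12.mp (h 1 2 (by decide) (by decide) (by decide))
    have e21 := h21.mp (h 2 1 (by decide) (by decide) (by decide))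
    have e13 := h13.mp (h 1 3 (by decide) (by decide) (by decide))
    have e23 := h23.mp (h 2 3 (by decide) (by decide) (by decide))
    have e31 := h31.mp (h 3 1 (by decide) (by decide) (by decide))
    have e32 := h32.mp (h 3 2 (by decide) (by decide) (by decide))
    exact ⟨by linarith, by linarith, by linarith, by linarith, by linarith, by linarith⟩
  · rintro ⟨e1, e2, e3, e4, e5, e6⟩ i j hi hj hij
    fin_cases i <;> fin_cases j <;>
      first
        | exact absurd rfl hi
        | exact absurd rfl hj
        | exact absurd rfl hij
        | exact h12.mpr (by linarith)
        | exact h21.mpr (by linarith)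
        | exact h13.mpr (by linarith)
        | exact h23.mpr (by linarith)
        | exact h31.mpr (by linarith)
        | exact h32.mpr (by linarith)
end

section
/- Conversely, if |φ⟩ ∈ C^2⊗C^2 is a unit vector such that |φ⟩⟨φ| has diagonal correlation tensor (T_{ij}=0 for i≠j, i,j∈{1,2,3}) in the Pauli basis, then up to a global phase |φ⟩ belongs to one of the six families a|φ^+⟩+b|φ^-⟩, a|ψ^+⟩+b|ψ^-⟩, a|φ^+⟩+b|ψ^+⟩, a|φ^-⟩+b|ψ^-⟩, a|φ^+⟩+ib|ψ^-⟩, a|φ^-⟩+ib|ψ^+⟩ with a,b real and a²+b²=1. -/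
open Matrix Kronecker

noncomputable def phiPlus : Fin 2 × Fin 2 → ℂ := fun p =>
  if p = (0, 0) then 1 / Real.sqrt 2 else if p = (1, 1) then 1 / Real.sqrt 2 else 0

noncomputable def phiMinus : Fin 2 × Fin 2 → ℂ := fun p =>
  if p = (0, 0) then 1 / Real.sqrt 2 else if p = (1, 1) then -(1 / Real.sqrt 2) else 0

noncomputable def psiPlus : Fin 2 × Fin 2 → ℂ := fun p =>
  if p = (0, 1) then 1 / Real.sqrt 2 else if p = (1, 0) then 1 / Real.sqrt 2 else 0

noncomputable def psiMinus : Fin 2 × Fin 2 → ℂ := fun p =>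
  if p = (0, 1) then 1 / Real.sqrt 2 else if p = (1, 0) then -(1 / Real.sqrt 2) else 0

/-- The correlation tensor of a projector is diagonal. -/
def DiagCorr (φ : Fin 2 × Fin 2 → ℂ) : Prop :=
  ∀ i j : Fin 4, i ≠ 0 → j ≠ 0 → i ≠ j →
    ((1 : ℂ)/4) * ((pauli i ⊗ₖ pauli j) * vecMulVec φ (star φ)).trace = 0


lemma key (u v : ℂ) (h : star u * v = star v * u)
    (hn : Complex.normSq u + Complex.normSq v = 2) :
    ∃ c : ℂ, ‖c‖ = 1 ∧ ∃ a b : ℝ, a ^ 2 + b ^ 2 = 1 ∧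
      u = c * (2 * (1 / (Real.sqrt 2 : ℂ)) * (a : ℂ)) ∧
      v = c * (2 * (1 / (Real.sqrt 2 : ℂ)) * (b : ℂ)) := by
  have hs2pos : (0:ℝ) < Real.sqrt 2 := Real.sqrt_pos.mpr (by norm_num)
  have hs2c : ((Real.sqrt 2 : ℝ) : ℂ) * ((Real.sqrt 2 : ℝ) : ℂ) = 2 := by
    norm_cast
    exact Real.mul_self_sqrt (by norm_num)
  have hs2ne : ((Real.sqrt 2 : ℝ) : ℂ) ≠ 0 := by exact_mod_cast hs2pos.ne'
  by_cases hu : u = 0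
  · have hnv : Complex.normSq v = 2 := by rw [hu] at hn; simpa using hn
    refine ⟨v / ((Real.sqrt 2 : ℝ) : ℂ), ?_, 0, 1, by norm_num, ?_, ?_⟩
    · have habsv : ‖v‖ = Real.sqrt 2 := by rw [Complex.norm_def, hnv]
      rw [norm_div, habsv, Complex.norm_real, Real.norm_eq_abs, abs_of_nonneg hs2pos.le, div_self hs2pos.ne']
    · rw [hu]; push_cast; ring
    · push_cast
      have expand : v / ((Real.sqrt 2:ℝ):ℂ) * (2 * (1 / ((Real.sqrt 2:ℝ):ℂ)) * 1)
          = 2 * v / (((Real.sqrt 2:ℝ):ℂ) * ((Real.sqrt 2:ℝ):ℂ)) := by ring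
      rw [expand, hs2c, eq_div_iff (two_ne_zero)]
      ring
  · have habs : ‖u‖ ≠ 0 := norm_ne_zero_iff.mpr hu
    have habsc : ((‖u‖ : ℝ) : ℂ) ≠ 0 := by exact_mod_cast habs
    have hnsu : Complex.normSq u ≠ 0 := fun h0 => hu (Complex.normSq_eq_zero.mp h0)
    have hnsc : ((Complex.normSq u : ℝ) : ℂ) ≠ 0 := by exact_mod_cast hnsu
    have hnc : ((‖u‖ : ℝ) : ℂ) * ((‖u‖ : ℝ) : ℂ)
        = ((Complex.normSq u : ℝ) : ℂ) := by
      norm_cast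
      rw [← Complex.sq_norm]
      ring
    have htconj : star (star u * v) = star u * v := by
      rw [star_mul', star_star, mul_comm]
      exact h.symm
    have htre : star u * v = (((star u * v).re : ℝ) : ℂ) := by
      exact (Complex.conj_eq_iff_re.mp (by rw [← Complex.star_def]; exact htconj)).symm
    set r : ℝ := (star u * v).re with hrdef
    have hveq : ((Complex.normSq u : ℝ) : ℂ) * v = (r : ℂ) * u := by
      rw [← htre, Complex.star_def, Complex.normSq_eq_conj_mul_self]
      push_cast
      ring
    have htre2 : r ^ 2 = Complex.normSq u * Complex.normSq v := by
      have h1 : Complex.normSq (star u * v) = Complex.normSq u * Complex.normSq v := by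
        rw [_root_.map_mul]
        simp [Complex.normSq_conj]
      rw [← h1, htre, Complex.normSq_ofReal]
      ring
    refine ⟨u / ((‖u‖ : ℝ) : ℂ), ?_, ‖u‖ / Real.sqrt 2,
      r / (Real.sqrt 2 * ‖u‖), ?_, ?_, ?_⟩
    · rw [norm_div, Complex.norm_real, norm_norm, div_self habs]
    · have ha2 : (‖u‖ / Real.sqrt 2) ^ 2 = Complex.normSq u / 2 := by
        rw [div_pow, Complex.sq_norm, Real.sq_sqrt (by norm_num : (0:ℝ) ≤ 2)]
      have hb2 : (r / (Real.sqrt 2 * ‖u‖)) ^ 2 = Complex.normSq v / 2 := by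
        rw [div_pow, mul_pow, Complex.sq_norm, Real.sq_sqrt (by norm_num : (0:ℝ) ≤ 2), htre2]
        field_simp
      rw [ha2, hb2]
      linarith
    · have e : ((‖u‖ / Real.sqrt 2 : ℝ) : ℂ)
          = ((‖u‖ : ℝ) : ℂ) / ((Real.sqrt 2 : ℝ) : ℂ) := by push_cast; ring
      rw [e]
      have expand : u / ((‖u‖ : ℝ) : ℂ) *
          (2 * (1 / ((Real.sqrt 2:ℝ):ℂ)) * (((‖u‖ : ℝ) : ℂ) / ((Real.sqrt 2:ℝ):ℂ)))
          = 2 * u * ((‖u‖ : ℝ) : ℂ) /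
            (((‖u‖ : ℝ) : ℂ) * (((Real.sqrt 2:ℝ):ℂ) * ((Real.sqrt 2:ℝ):ℂ))) := by
        ring
      rw [expand, hs2c, eq_div_iff (mul_ne_zero habsc two_ne_zero)]
      ring
    · have e : ((r / (Real.sqrt 2 * ‖u‖) : ℝ) : ℂ)
          = (r : ℂ) / (((Real.sqrt 2:ℝ):ℂ) * ((‖u‖ : ℝ) : ℂ)) := by push_cast; ring
      rw [e]
      have expand : u / ((‖u‖ : ℝ) : ℂ) *
          (2 * (1 / ((Real.sqrt 2:ℝ):ℂ)) *
            ((r : ℂ) / (((Real.sqrt 2:ℝ):ℂ) * ((‖u‖ : ℝ) : ℂ))))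
          = 2 * (r : ℂ) * u /
            ((((‖u‖ : ℝ) : ℂ) * ((‖u‖ : ℝ) : ℂ)) *
              (((Real.sqrt 2:ℝ):ℂ) * ((Real.sqrt 2:ℝ):ℂ))) := by ring
      rw [expand, hs2c, hnc, eq_div_iff (mul_ne_zero hnsc two_ne_zero)]
      linear_combination 2 * hveq

lemma keyI (u v : ℂ) (h : star u * v + star v * u = 0)
    (hn : Complex.normSq u + Complex.normSq v = 2) :
    ∃ c : ℂ, ‖c‖ = 1 ∧ ∃ a b : ℝ, a ^ 2 + b ^ 2 = 1 ∧
      u = c * (2 * (1 / (Real.sqrt 2 : ℂ)) * (a : ℂ)) ∧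
      v = c * (2 * (1 / (Real.sqrt 2 : ℂ)) * (Complex.I * (b : ℂ))) := by
  have hst : star (-Complex.I * v) = Complex.I * star v := by
    rw [star_mul', star_neg, Complex.star_def, Complex.conj_I, neg_neg]
  have h' : star u * (-Complex.I * v) = star (-Complex.I * v) * u := by
    rw [hst]
    linear_combination (-Complex.I) * h
  have hn' : Complex.normSq u + Complex.normSq (-Complex.I * v) = 2 := by
    have e : Complex.normSq (-Complex.I * v) = Complex.normSq v := by
      simp [Complex.normSq_mul]
    rw [e]; exact hn
  obtain ⟨c, hc, a, b, hab, h1, h2⟩ := key u (-Complex.I * v) h' hn'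
  exact ⟨c, hc, a, b, hab, h1, by linear_combination Complex.I * h2 + v * Complex.I_mul_I⟩

lemma tri1 (a u v : ℂ) (ha : a ≠ 0) (h1 : star a * u = star u * a)
    (h2 : star a * v = star v * a) (h3 : star u * v + star v * u = 0) :
    u = 0 ∨ v = 0 := by
  have hkey : (star u * v) * (star a * a) = 0 := by
    linear_combination (1/2 : ℂ) * (star a * a) * h3 + (1/2 : ℂ) * (star u * a) * h2
      - (1/2 : ℂ) * (star v * a) * h1
  rcases mul_eq_zero.mp hkey with h | h
  · rcases mul_eq_zero.mp h with h' | h'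
    · exact Or.inl (by simpa using congrArg star h')
    · exact Or.inr h'
  · rcases mul_eq_zero.mp h with h' | h'
    · exact absurd (by simpa using congrArg star h') ha
    · exact absurd h' ha

lemma tri2 (a u v : ℂ) (ha : a ≠ 0) (h1 : star a * u = star u * a)
    (h2 : star a * v + star v * a = 0) (h3 : star u * v = star v * u) :
    u = 0 ∨ v = 0 := by
  have hkey : (star u * v) * (star a * a) = 0 := by
    linear_combination (1/2 : ℂ) * (star a * a) * h3 + (1/2 : ℂ) * (star u * a) * h2
      + (1/2 : ℂ) * (star v * a) * h1
  rcases mul_eq_zero.mp hkey with h | h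
  · rcases mul_eq_zero.mp h with h' | h'
    · exact Or.inl (by simpa using congrArg star h')
    · exact Or.inr h'
  · rcases mul_eq_zero.mp h with h' | h'
    · exact absurd (by simpa using congrArg star h') ha
    · exact absurd h' ha

theorem diagonal_correlation_classification (φ : Fin 2 × Fin 2 → ℂ)
    (hunit : star φ ⬝ᵥ φ = 1) (hdiag : DiagCorr φ) :
    ∃ (c : ℂ), ‖c‖ = 1 ∧ ∃ (a b : ℝ), a ^ 2 + b ^ 2 = 1 ∧
      (φ = c • ((a : ℂ) • phiPlus + (b : ℂ) • phiMinus) ∨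
       φ = c • ((a : ℂ) • psiPlus + (b : ℂ) • psiMinus) ∨
       φ = c • ((a : ℂ) • phiPlus + (b : ℂ) • psiPlus) ∨
       φ = c • ((a : ℂ) • phiMinus + (b : ℂ) • psiMinus) ∨
       φ = c • ((a : ℂ) • phiPlus + (Complex.I * (b : ℂ)) • psiMinus) ∨
       φ = c • ((a : ℂ) • phiMinus + (Complex.I * (b : ℂ)) • psiPlus)) := by
  classical
  have h12 := hdiag 1 2 (by decide) (by decide) (by decide)
  have h21 := hdiag 2 1 (by decide) (by decide) (by decide)
  have h13 := hdiag 1 3 (by decide) (by decide) (by decide)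
  have h31 := hdiag 3 1 (by decide) (by decide) (by decide)
  have h23 := hdiag 2 3 (by decide) (by decide) (by decide)
  have h32 := hdiag 3 2 (by decide) (by decide) (by decide)
  rw [show pauli 1 = σx from rfl, show pauli 2 = σy from rfl] at h12 h21
  rw [show pauli 1 = σx from rfl, show pauli 3 = σz from rfl] at h13 h31
  rw [show pauli 2 = σy from rfl, show pauli 3 = σz from rfl] at h23 h32
  simp only [σx, σy, σz, Matrix.trace, Matrix.diag, Matrix.mul_apply,
    Matrix.kroneckerMap_apply, Matrix.vecMulVec_apply, Fintype.sum_prod_type,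
    Fin.sum_univ_two, Pi.star_apply, Matrix.cons_val_one, Matrix.cons_val_zero,
    Matrix.head_cons, Matrix.cons_val', Matrix.empty_val',
    Matrix.cons_val_fin_one, Matrix.of_apply, Matrix.head_fin_const,
    zero_mul, one_mul, mul_zero, mul_one, add_zero, zero_add, neg_mul,
    mul_neg] at h12 h21 h13 h31 h23 h32
  have hu := hunit
  simp only [dotProduct, Fintype.sum_prod_type, Fin.sum_univ_two, Pi.star_apply] at hu
  have conv : ∀ t : ℂ, star t * t = ((Complex.normSq t : ℝ) : ℂ) := fun t => by
    rw [Complex.star_def, Complex.normSq_eq_conj_mul_self]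
  rw [conv, conv, conv, conv] at hu
  have hnormR : Complex.normSq (φ (0, 0)) + Complex.normSq (φ (0, 1)) + (Complex.normSq (φ (1, 0)) + Complex.normSq (φ (1, 1))) = 1 := by
    exact_mod_cast hu
  have hab : star (φ (0, 0) + φ (1, 1)) * (φ (0, 0) - φ (1, 1)) = star (φ (0, 0) - φ (1, 1)) * (φ (0, 0) + φ (1, 1)) := by
    simp only [star_add, star_sub]
    linear_combination (-4*Complex.I) * h12 + (-4*Complex.I) * h21
      + ((star (φ (0, 0)) + star (φ (1, 1))) * (φ (0, 0) - φ (1, 1)) - (star (φ (0, 0)) - star (φ (1, 1))) * (φ (0, 0) + φ (1, 1))) * Complex.I_mul_I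
  have hgd : star (φ (0, 1) + φ (1, 0)) * (φ (0, 1) - φ (1, 0)) = star (φ (0, 1) - φ (1, 0)) * (φ (0, 1) + φ (1, 0)) := by
    simp only [star_add, star_sub]
    linear_combination (4*Complex.I) * h12 + (-4*Complex.I) * h21
      + ((star (φ (0, 1)) + star (φ (1, 0))) * (φ (0, 1) - φ (1, 0)) - (star (φ (0, 1)) - star (φ (1, 0))) * (φ (0, 1) + φ (1, 0))) * Complex.I_mul_I
  have had : star (φ (0, 0) + φ (1, 1)) * (φ (0, 1) - φ (1, 0)) + star (φ (0, 1) - φ (1, 0)) * (φ (0, 0) + φ (1, 1)) = 0 := by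
    simp only [star_add, star_sub]
    linear_combination (4:ℂ) * h31 + (-4:ℂ) * h13
  have hbg : star (φ (0, 0) - φ (1, 1)) * (φ (0, 1) + φ (1, 0)) + star (φ (0, 1) + φ (1, 0)) * (φ (0, 0) - φ (1, 1)) = 0 := by
    simp only [star_add, star_sub]
    linear_combination (4:ℂ) * h13 + (4:ℂ) * h31
  have hag : star (φ (0, 0) + φ (1, 1)) * (φ (0, 1) + φ (1, 0)) = star (φ (0, 1) + φ (1, 0)) * (φ (0, 0) + φ (1, 1)) := by
    simp only [star_add, star_sub]
    linear_combination (4*Complex.I) * h23 + (4*Complex.I) * h32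
      + ((star (φ (0, 0)) + star (φ (1, 1))) * (φ (0, 1) + φ (1, 0)) - (star (φ (0, 1)) + star (φ (1, 0))) * (φ (0, 0) + φ (1, 1))) * Complex.I_mul_I
  have hbd : star (φ (0, 0) - φ (1, 1)) * (φ (0, 1) - φ (1, 0)) = star (φ (0, 1) - φ (1, 0)) * (φ (0, 0) - φ (1, 1)) := by
    simp only [star_add, star_sub]
    linear_combination (4*Complex.I) * h32 + (-4*Complex.I) * h23
      + ((star (φ (0, 0)) - star (φ (1, 1))) * (φ (0, 1) - φ (1, 0)) - (star (φ (0, 1)) - star (φ (1, 0))) * (φ (0, 0) - φ (1, 1))) * Complex.I_mul_I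
  by_cases hG : φ (0, 1) + φ (1, 0) = 0
  · by_cases hD : φ (0, 1) - φ (1, 0) = 0
    · -- Family 1
      have hy : φ (0, 1) = 0 := by linear_combination (1/2:ℂ)*hG + (1/2:ℂ)*hD
      have hz : φ (1, 0) = 0 := by linear_combination (1/2:ℂ)*hG - (1/2:ℂ)*hD
      have hn2 : Complex.normSq (φ (0, 0) + φ (1, 1)) + Complex.normSq (φ (0, 0) - φ (1, 1)) = 2 := by
        rw [hy, hz] at hnormR
        simp only [Complex.normSq_apply, Complex.add_re, Complex.add_im, Complex.sub_re, Complex.sub_im, Complex.neg_re, Complex.neg_im, Complex.zero_re, Complex.zero_im, Complex.normSq_zero, add_zero, zero_add, sub_neg_eq_add] at hnormR ⊢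
        linear_combination 2*hnormR
      obtain ⟨c, hc, a, b, hab2, hueq, hveq⟩ := key (φ (0, 0) + φ (1, 1)) (φ (0, 0) - φ (1, 1)) hab hn2
      refine ⟨c, hc, a, b, hab2, Or.inl ?_⟩
      funext p
      obtain ⟨i, j⟩ := p
      fin_cases i <;> fin_cases j <;>
        simp only [Pi.smul_apply, Pi.add_apply, smul_eq_mul, phiPlus, phiMinus, psiPlus,
          psiMinus] <;>
        norm_num [Prod.mk.injEq, -Prod.mk_zero_zero, -Prod.mk_one_one]
      · linear_combination (1/2:ℂ)*hueq + (1/2:ℂ)*hveq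
      · linear_combination hy
      · linear_combination hz
      · linear_combination (1/2:ℂ)*hueq - (1/2:ℂ)*hveq
    · by_cases hA : φ (0, 0) + φ (1, 1) = 0
      · by_cases hB : φ (0, 0) - φ (1, 1) = 0
        · -- Family 2
          have hx : φ (0, 0) = 0 := by linear_combination (1/2:ℂ)*hA + (1/2:ℂ)*hB
          have hw : φ (1, 1) = 0 := by linear_combination (1/2:ℂ)*hA - (1/2:ℂ)*hB
          have hn2 : Complex.normSq (φ (0, 1) + φ (1, 0)) + Complex.normSq (φ (0, 1) - φ (1, 0)) = 2 := by
            rw [hx, hw] at hnormR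
            simp only [Complex.normSq_apply, Complex.add_re, Complex.add_im, Complex.sub_re, Complex.sub_im, Complex.neg_re, Complex.neg_im, Complex.zero_re, Complex.zero_im, Complex.normSq_zero, add_zero, zero_add, sub_neg_eq_add] at hnormR ⊢
            linear_combination 2*hnormR
          obtain ⟨c, hc, a, b, hab2, hueq, hveq⟩ := key (φ (0, 1) + φ (1, 0)) (φ (0, 1) - φ (1, 0)) hgd hn2
          refine ⟨c, hc, a, b, hab2, Or.inr (Or.inl ?_)⟩
          funext p
          obtain ⟨i, j⟩ := p
          fin_cases i <;> fin_cases j <;>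
            simp only [Pi.smul_apply, Pi.add_apply, smul_eq_mul, phiPlus, phiMinus, psiPlus,
              psiMinus] <;>
            norm_num [Prod.mk.injEq, -Prod.mk_zero_zero, -Prod.mk_one_one]
          · linear_combination hx
          · linear_combination (1/2:ℂ)*hueq + (1/2:ℂ)*hveq
          · linear_combination (1/2:ℂ)*hueq - (1/2:ℂ)*hveq
          · linear_combination hw
        · -- Family 4 : A = 0, G = 0, pair (B, D)
          have hw : φ (1, 1) = -φ (0, 0) := by linear_combination hA
          have hz : φ (1, 0) = -φ (0, 1) := by linear_combination hG
          have hn2 : Complex.normSq (φ (0, 0) - φ (1, 1)) + Complex.normSq (φ (0, 1) - φ (1, 0)) = 2 := by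
            rw [hw, hz] at hnormR ⊢
            simp only [Complex.normSq_apply, Complex.add_re, Complex.add_im, Complex.sub_re, Complex.sub_im, Complex.neg_re, Complex.neg_im, Complex.zero_re, Complex.zero_im, Complex.normSq_zero, add_zero, zero_add, sub_neg_eq_add] at hnormR ⊢
            linear_combination 2*hnormR
          obtain ⟨c, hc, a, b, hab2, hueq, hveq⟩ := key (φ (0, 0) - φ (1, 1)) (φ (0, 1) - φ (1, 0)) hbd hn2
          refine ⟨c, hc, a, b, hab2, Or.inr (Or.inr (Or.inr (Or.inl ?_)))⟩
          funext p
          obtain ⟨i, j⟩ := p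
          fin_cases i <;> fin_cases j <;>
            simp only [Pi.smul_apply, Pi.add_apply, smul_eq_mul, phiPlus, phiMinus, psiPlus,
              psiMinus] <;>
            norm_num [Prod.mk.injEq, -Prod.mk_zero_zero, -Prod.mk_one_one]
          · linear_combination (1/2:ℂ)*hueq + (1/2:ℂ)*hw
          · linear_combination (1/2:ℂ)*hveq + (1/2:ℂ)*hz
          · linear_combination (-1/2:ℂ)*hveq + (1/2:ℂ)*hz
          · linear_combination (-1/2:ℂ)*hueq + (1/2:ℂ)*hw
      · by_cases hB : φ (0, 0) - φ (1, 1) = 0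
        · -- Family 5 : B = 0, G = 0, pair (A, D), perp
          have hw : φ (1, 1) = φ (0, 0) := by linear_combination -hB
          have hz : φ (1, 0) = -φ (0, 1) := by linear_combination hG
          have hn2 : Complex.normSq (φ (0, 0) + φ (1, 1)) + Complex.normSq (φ (0, 1) - φ (1, 0)) = 2 := by
            rw [hw, hz] at hnormR ⊢
            simp only [Complex.normSq_apply, Complex.add_re, Complex.add_im, Complex.sub_re, Complex.sub_im, Complex.neg_re, Complex.neg_im, Complex.zero_re, Complex.zero_im, Complex.normSq_zero, add_zero, zero_add, sub_neg_eq_add] at hnormR ⊢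
            linear_combination 2*hnormR
          obtain ⟨c, hc, a, b, hab2, hueq, hveq⟩ := keyI (φ (0, 0) + φ (1, 1)) (φ (0, 1) - φ (1, 0)) had hn2
          refine ⟨c, hc, a, b, hab2, Or.inr (Or.inr (Or.inr (Or.inr (Or.inl ?_))))⟩
          funext p
          obtain ⟨i, j⟩ := p
          fin_cases i <;> fin_cases j <;>
            simp only [Pi.smul_apply, Pi.add_apply, smul_eq_mul, phiPlus, phiMinus, psiPlus,
              psiMinus] <;>
            norm_num [Prod.mk.injEq, -Prod.mk_zero_zero, -Prod.mk_one_one]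
          · linear_combination (1/2:ℂ)*hueq - (1/2:ℂ)*hw
          · linear_combination (1/2:ℂ)*hveq + (1/2:ℂ)*hz
          · linear_combination (-1/2:ℂ)*hveq + (1/2:ℂ)*hz
          · linear_combination (1/2:ℂ)*hueq + (1/2:ℂ)*hw
        · -- contradiction: A ≠ 0, B ≠ 0, D ≠ 0 (tri2 A B D)
          rcases tri2 (φ (0, 0) + φ (1, 1)) (φ (0, 0) - φ (1, 1)) (φ (0, 1) - φ (1, 0)) hA hab had hbd with h | h
          · exact absurd h hB
          · exact absurd h hD
  · by_cases hD : φ (0, 1) - φ (1, 0) = 0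
    · by_cases hA : φ (0, 0) + φ (1, 1) = 0
      · by_cases hB : φ (0, 0) - φ (1, 1) = 0
        · -- Family 2 again
          have hx : φ (0, 0) = 0 := by linear_combination (1/2:ℂ)*hA + (1/2:ℂ)*hB
          have hw : φ (1, 1) = 0 := by linear_combination (1/2:ℂ)*hA - (1/2:ℂ)*hB
          have hn2 : Complex.normSq (φ (0, 1) + φ (1, 0)) + Complex.normSq (φ (0, 1) - φ (1, 0)) = 2 := by
            rw [hx, hw] at hnormR
            simp only [Complex.normSq_apply, Complex.add_re, Complex.add_im, Complex.sub_re, Complex.sub_im, Complex.neg_re, Complex.neg_im, Complex.zero_re, Complex.zero_im, Complex.normSq_zero, add_zero, zero_add, sub_neg_eq_add] at hnormR ⊢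
            linear_combination 2*hnormR
          obtain ⟨c, hc, a, b, hab2, hueq, hveq⟩ := key (φ (0, 1) + φ (1, 0)) (φ (0, 1) - φ (1, 0)) hgd hn2
          refine ⟨c, hc, a, b, hab2, Or.inr (Or.inl ?_)⟩
          funext p
          obtain ⟨i, j⟩ := p
          fin_cases i <;> fin_cases j <;>
            simp only [Pi.smul_apply, Pi.add_apply, smul_eq_mul, phiPlus, phiMinus, psiPlus,
              psiMinus] <;>
            norm_num [Prod.mk.injEq, -Prod.mk_zero_zero, -Prod.mk_one_one]
          · linear_combination hx
          · linear_combination (1/2:ℂ)*hueq + (1/2:ℂ)*hveq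
          · linear_combination (1/2:ℂ)*hueq - (1/2:ℂ)*hveq
          · linear_combination hw
        · -- Family 6 : A = 0, D = 0, pair (B, G), perp
          have hw : φ (1, 1) = -φ (0, 0) := by linear_combination hA
          have hz : φ (1, 0) = φ (0, 1) := by linear_combination -hD
          have hn2 : Complex.normSq (φ (0, 0) - φ (1, 1)) + Complex.normSq (φ (0, 1) + φ (1, 0)) = 2 := by
            rw [hw, hz] at hnormR ⊢
            simp only [Complex.normSq_apply, Complex.add_re, Complex.add_im, Complex.sub_re, Complex.sub_im, Complex.neg_re, Complex.neg_im, Complex.zero_re, Complex.zero_im, Complex.normSq_zero, add_zero, zero_add, sub_neg_eq_add] at hnormR ⊢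
            linear_combination 2*hnormR
          obtain ⟨c, hc, a, b, hab2, hueq, hveq⟩ := keyI (φ (0, 0) - φ (1, 1)) (φ (0, 1) + φ (1, 0)) hbg hn2
          refine ⟨c, hc, a, b, hab2, Or.inr (Or.inr (Or.inr (Or.inr (Or.inr ?_))))⟩
          funext p
          obtain ⟨i, j⟩ := p
          fin_cases i <;> fin_cases j <;>
            simp only [Pi.smul_apply, Pi.add_apply, smul_eq_mul, phiPlus, phiMinus, psiPlus,
              psiMinus] <;>
            norm_num [Prod.mk.injEq, -Prod.mk_zero_zero, -Prod.mk_one_one]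
          · linear_combination (1/2:ℂ)*hueq + (1/2:ℂ)*hw
          · linear_combination (1/2:ℂ)*hveq - (1/2:ℂ)*hz
          · linear_combination (1/2:ℂ)*hveq + (1/2:ℂ)*hz
          · linear_combination (-1/2:ℂ)*hueq + (1/2:ℂ)*hw
      · by_cases hB : φ (0, 0) - φ (1, 1) = 0
        · -- Family 3 : B = 0, D = 0, pair (A, G)
          have hw : φ (1, 1) = φ (0, 0) := by linear_combination -hB
          have hz : φ (1, 0) = φ (0, 1) := by linear_combination -hD
          have hn2 : Complex.normSq (φ (0, 0) + φ (1, 1)) + Complex.normSq (φ (0, 1) + φ (1, 0)) = 2 := by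
            rw [hw, hz] at hnormR ⊢
            simp only [Complex.normSq_apply, Complex.add_re, Complex.add_im, Complex.sub_re, Complex.sub_im, Complex.neg_re, Complex.neg_im, Complex.zero_re, Complex.zero_im, Complex.normSq_zero, add_zero, zero_add, sub_neg_eq_add] at hnormR ⊢
            linear_combination 2*hnormR
          obtain ⟨c, hc, a, b, hab2, hueq, hveq⟩ := key (φ (0, 0) + φ (1, 1)) (φ (0, 1) + φ (1, 0)) hag hn2
          refine ⟨c, hc, a, b, hab2, Or.inr (Or.inr (Or.inl ?_))⟩
          funext p
          obtain ⟨i, j⟩ := p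
          fin_cases i <;> fin_cases j <;>
            simp only [Pi.smul_apply, Pi.add_apply, smul_eq_mul, phiPlus, phiMinus, psiPlus,
              psiMinus] <;>
            norm_num [Prod.mk.injEq, -Prod.mk_zero_zero, -Prod.mk_one_one]
          · linear_combination (1/2:ℂ)*hueq - (1/2:ℂ)*hw
          · linear_combination (1/2:ℂ)*hveq - (1/2:ℂ)*hz
          · linear_combination (1/2:ℂ)*hveq + (1/2:ℂ)*hz
          · linear_combination (1/2:ℂ)*hueq + (1/2:ℂ)*hw
        · -- contradiction: A ≠ 0, B ≠ 0, G ≠ 0 (tri1 A B G)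
          rcases tri1 (φ (0, 0) + φ (1, 1)) (φ (0, 0) - φ (1, 1)) (φ (0, 1) + φ (1, 0)) hA hab hag hbg with h | h
          · exact absurd h hB
          · exact absurd h hG
    · by_cases hA : φ (0, 0) + φ (1, 1) = 0
      · by_cases hB : φ (0, 0) - φ (1, 1) = 0
        · -- Family 2 again
          have hx : φ (0, 0) = 0 := by linear_combination (1/2:ℂ)*hA + (1/2:ℂ)*hB
          have hw : φ (1, 1) = 0 := by linear_combination (1/2:ℂ)*hA - (1/2:ℂ)*hB
          have hn2 : Complex.normSq (φ (0, 1) + φ (1, 0)) + Complex.normSq (φ (0, 1) - φ (1, 0)) = 2 := by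
            rw [hx, hw] at hnormR
            simp only [Complex.normSq_apply, Complex.add_re, Complex.add_im, Complex.sub_re, Complex.sub_im, Complex.neg_re, Complex.neg_im, Complex.zero_re, Complex.zero_im, Complex.normSq_zero, add_zero, zero_add, sub_neg_eq_add] at hnormR ⊢
            linear_combination 2*hnormR
          obtain ⟨c, hc, a, b, hab2, hueq, hveq⟩ := key (φ (0, 1) + φ (1, 0)) (φ (0, 1) - φ (1, 0)) hgd hn2
          refine ⟨c, hc, a, b, hab2, Or.inr (Or.inl ?_)⟩
          funext p
          obtain ⟨i, j⟩ := p
          fin_cases i <;> fin_cases j <;>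
            simp only [Pi.smul_apply, Pi.add_apply, smul_eq_mul, phiPlus, phiMinus, psiPlus,
              psiMinus] <;>
            norm_num [Prod.mk.injEq, -Prod.mk_zero_zero, -Prod.mk_one_one]
          · linear_combination hx
          · linear_combination (1/2:ℂ)*hueq + (1/2:ℂ)*hveq
          · linear_combination (1/2:ℂ)*hueq - (1/2:ℂ)*hveq
          · linear_combination hw
        · -- contradiction: B ≠ 0, G ≠ 0, D ≠ 0 (tri2 B D G)
          rcases tri2 (φ (0, 0) - φ (1, 1)) (φ (0, 1) - φ (1, 0)) (φ (0, 1) + φ (1, 0)) hB hbd hbg hgd.symm with h | h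
          · exact absurd h hD
          · exact absurd h hG
      · -- contradiction: A ≠ 0, G ≠ 0, D ≠ 0 (tri2 A G D)
        rcases tri2 (φ (0, 0) + φ (1, 1)) (φ (0, 1) + φ (1, 0)) (φ (0, 1) - φ (1, 0)) hA hag had hgd with h | h
        · exact absurd h hG
        · exact absurd h hD
end

section
/- Let A = (I⊗E)(|φ^+⟩⟨φ^+|) be the output of the amplitude-damping channel E with parameter γ ∈ [0,1] applied to the second qubit of the Bell state |φ^+⟩. Then Tr(W_2 A) = (1/4)[2(2a²-1)√(1-γ) + γ - 2a√(1-a²)·γ], where W_2 = (|φ_2⟩⟨φ_2|)^Γ with |φ_2⟩ = a|ψ^+⟩ + √(1-a²)|ψ^-⟩ and 0 ≤ a ≤ 1. -/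
open Matrix Kronecker

/-- Partial transpose on the second tensor factor. -/
def ptrans (X : Matrix (Fin 2 × Fin 2) (Fin 2 × Fin 2) ℂ) :
    Matrix (Fin 2 × Fin 2) (Fin 2 × Fin 2) ℂ :=
  Matrix.of fun p q => X (p.1, q.2) (q.1, p.2)

set_option maxHeartbeats 4000000 in
theorem amplitude_damping_witness_value (γ a : ℝ)
    (hγ0 : 0 ≤ γ) (hγ1 : γ ≤ 1) (ha0 : 0 ≤ a) (ha1 : a ≤ 1)
    (A0 A1 : Matrix (Fin 2) (Fin 2) ℂ)
    (hA0 : A0 = !![1, 0; 0, (Real.sqrt (1 - γ) : ℂ)])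
    (hA1 : A1 = !![0, (Real.sqrt γ : ℂ); 0, 0])
    (A : Matrix (Fin 2 × Fin 2) (Fin 2 × Fin 2) ℂ)
    (hA : A = ((1 : Matrix (Fin 2) (Fin 2) ℂ) ⊗ₖ A0) * vecMulVec phiPlus (star phiPlus) *
            ((1 : Matrix (Fin 2) (Fin 2) ℂ) ⊗ₖ A0)ᴴ
          + ((1 : Matrix (Fin 2) (Fin 2) ℂ) ⊗ₖ A1) * vecMulVec phiPlus (star phiPlus) *
            ((1 : Matrix (Fin 2) (Fin 2) ℂ) ⊗ₖ A1)ᴴ)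
    (φ2 : Fin 2 × Fin 2 → ℂ)
    (hφ2 : φ2 = (a : ℂ) • psiPlus + ((Real.sqrt (1 - a ^ 2) : ℝ) : ℂ) • psiMinus)
    (W2 : Matrix (Fin 2 × Fin 2) (Fin 2 × Fin 2) ℂ)
    (hW2 : W2 = ptrans (vecMulVec φ2 (star φ2))) :
    (W2 * A).trace =
      (((1/4 : ℝ) * (2 * (2 * a ^ 2 - 1) * Real.sqrt (1 - γ) + γ
        - 2 * a * Real.sqrt (1 - a ^ 2) * γ) : ℝ) : ℂ) := by
  subst hA0 hA1 hA hφ2 hW2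
  have h2 : ((Real.sqrt 2 : ℝ) : ℂ) * ((Real.sqrt 2 : ℝ) : ℂ) = 2 := by
    norm_cast
    exact Real.mul_self_sqrt (by norm_num)
  have hg : ((Real.sqrt γ : ℝ) : ℂ) * ((Real.sqrt γ : ℝ) : ℂ) = (γ : ℂ) := by
    norm_cast; exact Real.mul_self_sqrt hγ0
  have h1g : ((Real.sqrt (1-γ) : ℝ) : ℂ) * ((Real.sqrt (1-γ) : ℝ) : ℂ) = ((1-γ : ℝ) : ℂ) := by
    norm_cast; exact Real.mul_self_sqrt (by linarith)
  have ha : ((Real.sqrt (1-a^2) : ℝ) : ℂ) * ((Real.sqrt (1-a^2) : ℝ) : ℂ) = ((1-a^2 : ℝ) : ℂ) := by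
    norm_cast; exact Real.mul_self_sqrt (by nlinarith)
  have hs2 : ((Real.sqrt 2 : ℝ) : ℂ) ≠ 0 := by
    norm_cast; positivity
  set_option maxHeartbeats 2000000 in
  simp only [Matrix.trace, Matrix.diag, Matrix.mul_apply, Fintype.sum_prod_type,
    Fin.sum_univ_two, ptrans, Matrix.of_apply, vecMulVec_apply, Pi.add_apply, Pi.smul_apply,
    Pi.star_apply, phiPlus, psiPlus, psiMinus, Matrix.add_apply, kroneckerMap_apply,
    Matrix.conjTranspose_apply, Matrix.one_apply, smul_eq_mul, star_mul', star_add]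
  norm_num [Matrix.one_apply, Prod.ext_iff]
  field_simp
  ring_nf
  have hg' : ((Real.sqrt γ : ℝ) : ℂ) ^ 2 = (γ : ℂ) := by rw [sq, hg]
  have ha' : ((Real.sqrt (1-a^2) : ℝ) : ℂ) ^ 2 = ((1-a^2 : ℝ) : ℂ) := by rw [sq, ha]
  have h2' : ((Real.sqrt 2 : ℝ) : ℂ) ^ 4 = 4 := by
    have : ((Real.sqrt 2 : ℝ) : ℂ) ^ 4 = (((Real.sqrt 2:ℝ):ℂ) * ((Real.sqrt 2:ℝ):ℂ))^2 := by ring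
    rw [this, h2]; norm_num
  rw [hg', ha', h2']
  push_cast
  ring
end

section
/- Let |ψ⟩ = Σ_i x_i |ii⟩ in C^d⊗C^d with x_i > 0 and Σ x_i² = 1, and let x* = max_i x_i. Then W = λ·I⊗I - |ψ⟩⟨ψ| is block-positive if and only if λ ≥ x*², and W has a negative eigenvalue if and only if λ < 1. In particular, W is an entanglement witness iff x*² ≤ λ < 1. -/
open Matrix ComplexOrder

/-- Tensor product of vectors. -/
def tp {d : ℕ} (u v : Fin d → ℂ) : Fin d × Fin d → ℂ := fun p => u p.1 * v p.2

lemma vecMulVec_mulVec' {n : Type*} [Fintype n] (u w v : n → ℂ) :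
    (vecMulVec u w).mulVec v = (w ⬝ᵥ v) • u := by
  ext j
  simp only [mulVec, dotProduct, vecMulVec_apply, Pi.smul_apply, smul_eq_mul,
    Finset.sum_mul]
  exact Finset.sum_congr rfl fun k _ => by ring

theorem witness_lambda_identity_minus_mc {d : ℕ} (x : Fin d → ℝ)
    (hxpos : ∀ i, 0 < x i) (hx : ∑ i, (x i) ^ 2 = 1)
    (xstar : ℝ) (hxstar : IsGreatest (Set.range x) xstar)
    (lam : ℝ)
    (ψ : Fin d × Fin d → ℂ) (hψ : ψ = fun p => if p.1 = p.2 then ((x p.1 : ℝ) : ℂ) else 0)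
    (W : Matrix (Fin d × Fin d) (Fin d × Fin d) ℂ)
    (hW : W = (lam : ℂ) • (1 : Matrix (Fin d × Fin d) (Fin d × Fin d) ℂ)
      - vecMulVec ψ (star ψ)) :
    ((∀ a b : Fin d → ℂ, 0 ≤ star (tp a b) ⬝ᵥ W.mulVec (tp a b)) ↔ xstar ^ 2 ≤ lam) ∧
    ((∃ μ : ℝ, μ < 0 ∧ ∃ v : Fin d × Fin d → ℂ, v ≠ 0 ∧ W.mulVec v = (μ : ℂ) • v) ↔ lam < 1) ∧
    (((∀ a b : Fin d → ℂ, 0 ≤ star (tp a b) ⬝ᵥ W.mulVec (tp a b)) ∧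
        (∃ μ : ℝ, μ < 0 ∧ ∃ v : Fin d × Fin d → ℂ, v ≠ 0 ∧ W.mulVec v = (μ : ℂ) • v)) ↔
      (xstar ^ 2 ≤ lam ∧ lam < 1)) := by
  obtain ⟨⟨i0, hi0⟩, hub⟩ := hxstar
  have hxstarpos : 0 < xstar := hi0 ▸ hxpos i0
  -- ⟨ψ|ψ⟩ = 1
  have hψψ : star ψ ⬝ᵥ ψ = 1 := by
    subst hψ
    simp only [dotProduct, Pi.star_apply, Fintype.sum_prod_type]
    have : ∀ i j : Fin d, star (if i = j then ((x i : ℝ) : ℂ) else 0) *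
        (if i = j then ((x i : ℝ) : ℂ) else 0) = if j = i then (((x i) ^ 2 : ℝ) : ℂ) else 0 := by
      intro i j
      by_cases h : i = j <;> simp [h, eq_comm, Complex.star_def, Complex.conj_ofReal]
      push_cast; ring
    simp only [this, Finset.sum_ite_eq', Finset.mem_univ, if_true]
    norm_cast
  have hWmul : ∀ v, W.mulVec v = (lam : ℂ) • v - (star ψ ⬝ᵥ v) • ψ := by
    intro v
    rw [hW, sub_mulVec, smul_mulVec, one_mulVec, vecMulVec_mulVec']
  -- key quadratic form formula
  have key : ∀ a b : Fin d → ℂ, star (tp a b) ⬝ᵥ W.mulVec (tp a b)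
      = ((lam * (∑ i, Complex.normSq (a i)) * (∑ i, Complex.normSq (b i))
          - Complex.normSq (∑ i, (x i : ℂ) * (a i * b i)) : ℝ) : ℂ) := by
    intro a b
    rw [hWmul, dotProduct_sub, dotProduct_smul, dotProduct_smul]
    have hA : star (tp a b) ⬝ᵥ (tp a b)
        = (((∑ i, Complex.normSq (a i)) * (∑ i, Complex.normSq (b i)) : ℝ) : ℂ) := by
      simp only [dotProduct, Pi.star_apply, tp, Fintype.sum_prod_type]
      push_cast
      rw [Finset.sum_mul_sum]
      refine Finset.sum_congr rfl fun i _ => Finset.sum_congr rfl fun j _ => ?_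
      rw [Complex.star_def, mul_comm, Complex.mul_conj, Complex.normSq_mul]
      push_cast; ring
    have hc1 : star ψ ⬝ᵥ tp a b = ∑ i, (x i : ℂ) * (a i * b i) := by
      subst hψ
      simp only [dotProduct, Pi.star_apply, tp, Fintype.sum_prod_type]
      have : ∀ i j : Fin d, star (if i = j then ((x i : ℝ) : ℂ) else 0) * (a i * b j)
          = if j = i then (x i : ℂ) * (a i * b j) else 0 := by
        intro i j
        by_cases h : i = j <;> simp [h, eq_comm, Complex.star_def, Complex.conj_ofReal]
      simp only [this, Finset.sum_ite_eq', Finset.mem_univ, if_true]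
    have hc2 : star (tp a b) ⬝ᵥ ψ = (starRingEnd ℂ) (∑ i, (x i : ℂ) * (a i * b i)) := by
      subst hψ
      simp only [dotProduct, Pi.star_apply, tp, Fintype.sum_prod_type]
      have : ∀ i j : Fin d, star (a i * b j) * (if i = j then ((x i : ℝ) : ℂ) else 0)
          = if j = i then (starRingEnd ℂ) ((x i : ℂ) * (a i * b i)) else 0 := by
        intro i j
        by_cases h : i = j <;>
          simp [h, eq_comm, Complex.star_def, Complex.conj_ofReal, _root_.map_mul]
        ring
      simp only [this, Finset.sum_ite_eq', Finset.mem_univ, if_true]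
      rw [map_sum]
    rw [hA, hc1, hc2, smul_eq_mul, smul_eq_mul, Complex.mul_conj]
    push_cast; ring
  -- block positivity
  have pos_iff : (∀ a b : Fin d → ℂ, 0 ≤ star (tp a b) ⬝ᵥ W.mulVec (tp a b)) ↔ xstar ^ 2 ≤ lam := by
    constructor
    · intro h
      set e : Fin d → ℂ := fun i => if i = i0 then 1 else 0 with he
      have h0 := h e e
      rw [key, Complex.zero_le_real] at h0
      have hs : ∑ i, Complex.normSq (e i) = 1 := by
        have : ∀ i, Complex.normSq (e i) = if i = i0 then 1 else 0 := by
          intro i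
          by_cases h : i = i0 <;> simp [he, h]
        simp [this]
      have hc : ∑ i, (x i : ℂ) * (e i * e i) = ((x i0 : ℝ) : ℂ) := by
        have : ∀ i, (x i : ℂ) * (e i * e i) = if i = i0 then (x i0 : ℂ) else 0 := by
          intro i
          by_cases h : i = i0 <;> simp [he, h]
        simp [this]
      rw [hs, hc, Complex.normSq_ofReal] at h0
      nlinarith [hi0 ▸ h0]
    · intro hlam a b
      rw [key, Complex.zero_le_real]
      set A := ∑ i, Complex.normSq (a i) with hAdef
      set B := ∑ i, Complex.normSq (b i) with hBdef
      set c := ∑ i, (x i : ℂ) * (a i * b i) with hcdef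
      have hA0 : 0 ≤ A := Finset.sum_nonneg fun i _ => Complex.normSq_nonneg _
      have hB0 : 0 ≤ B := Finset.sum_nonneg fun i _ => Complex.normSq_nonneg _
      set S1 := ∑ i, x i * (‖a i‖ * ‖b i‖) with hS1
      set S2 := ∑ i, ‖a i‖ * ‖b i‖ with hS2
      have habs : ‖c‖ ≤ S1 := by
        refine (norm_sum_le _ _).trans_eq (Finset.sum_congr rfl fun i _ => ?_)
        rw [norm_mul, norm_mul, Complex.norm_real, Real.norm_of_nonneg (hxpos i).le]
      have hS20 : 0 ≤ S2 := Finset.sum_nonneg fun i _ => by positivity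
      have hS12 : S1 ≤ xstar * S2 := by
        rw [hS1, hS2, Finset.mul_sum]
        refine Finset.sum_le_sum fun i _ => ?_
        have := hub ⟨i, rfl⟩
        have h1 : (0:ℝ) ≤ ‖a i‖ * ‖b i‖ := by positivity
        nlinarith
      have hS10 : 0 ≤ S1 := (norm_nonneg c).trans habs
      have hCS : S2 ^ 2 ≤ A * B := by
        have := Finset.sum_mul_sq_le_sq_mul_sq Finset.univ
          (fun i => ‖a i‖) (fun i => ‖b i‖)
        simpa [hS2, hAdef, hBdef, Complex.sq_norm] using this
      have h1 : Complex.normSq c ≤ S1 ^ 2 := by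
        rw [← Complex.sq_norm]
        exact pow_le_pow_left₀ (norm_nonneg c) habs 2
      have h2 : S1 ^ 2 ≤ xstar ^ 2 * S2 ^ 2 := by
        have := pow_le_pow_left₀ hS10 hS12 2
        nlinarith
      have h3 : xstar ^ 2 * S2 ^ 2 ≤ xstar ^ 2 * (A * B) := by
        exact mul_le_mul_of_nonneg_left hCS (by positivity)
      have h4 : xstar ^ 2 * (A * B) ≤ lam * (A * B) :=
        mul_le_mul_of_nonneg_right hlam (by positivity)
      nlinarith
  have eig_iff : (∃ μ : ℝ, μ < 0 ∧ ∃ v : Fin d × Fin d → ℂ, v ≠ 0 ∧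
      W.mulVec v = (μ : ℂ) • v) ↔ lam < 1 := by
    constructor
    · rintro ⟨μ, hμ, v, hv0, hvW⟩
      rw [hWmul] at hvW
      set c := star ψ ⬝ᵥ v with hcdef
      have hkey : ((lam : ℂ) - (μ : ℂ)) • v = c • ψ := by
        have h := hvW
        have : (lam : ℂ) • v - (μ : ℂ) • v = c • ψ := by
          rw [sub_eq_iff_eq_add]
          rw [sub_eq_iff_eq_add] at h
          rw [h]; abel
        rw [← this, sub_smul]
      by_cases hc : c = 0
      · rw [hc, zero_smul] at hkey
        obtain ⟨p, hp⟩ : ∃ p, v p ≠ 0 := Function.ne_iff.mp hv0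
        have h := congrFun hkey p
        simp only [Pi.smul_apply, smul_eq_mul, Pi.zero_apply] at h
        rcases mul_eq_zero.mp h with h' | h'
        · have : (lam : ℂ) = (μ : ℂ) := sub_eq_zero.mp h'
          have : lam = μ := by exact_mod_cast this
          linarith
        · exact absurd h' hp
      · have hd := congrArg (fun w => star ψ ⬝ᵥ w) hkey
        simp only [dotProduct_smul, hψψ, ← hcdef, smul_eq_mul, mul_one] at hd
        have h1 : (lam : ℂ) - (μ : ℂ) = 1 := by
          have h2 : ((lam : ℂ) - (μ : ℂ)) * c = 1 * c := by rw [hd, one_mul]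
          exact mul_right_cancel₀ hc h2
        have : lam - μ = 1 := by exact_mod_cast h1
        linarith
    · intro hlam
      refine ⟨lam - 1, by linarith, ψ, ?_, ?_⟩
      · intro h0
        have := congrFun h0 (i0, i0)
        rw [hψ] at this
        simp at this
        exact (hxpos i0).ne' this
      · rw [hWmul, hψψ, one_smul, Complex.ofReal_sub, Complex.ofReal_one, sub_smul, one_smul]
  exact ⟨pos_iff, eig_iff, and_congr pos_iff eig_iff⟩
end
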